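/- For every nonnegative integer n, the alternating sum over all integers k of (-1)^k * q^(2k²) * [2n choose n+2k]_q equals the q-Pochhammer product (-q; q²)_n = ∏_{i=0}^{n-1} (1 + q^(2i+1)), as polynomials in q. -/

import Mathlib

open Polynomial

/-- The Gaussian (q-)binomial coefficient as a polynomial in `q = X`, via the
q-Pascal recurrence `[n+1, k+1] = [n, k] + q^(k+1) [n, k+1]`. -/
noncomputable def gbinom : ℕ → ℕ → Polynomial ℤ
  | _, 0 => 1
  | 0, _ + 1 => 0
  | n + 1, k + 1 => gbinom n k + Polynomial.X ^ (k + 1) * gbinom n (k + 1)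

/-- Gaussian binomial with integer lower index, zero for negative lower index. -/
noncomputable def gbinomZ (N : ℕ) (r : ℤ) : Polynomial ℤ := if 0 ≤ r then gbinom N r.toNat else 0

namespace GaussAux

open Function

lemma gbinom_zero (n : ℕ) : gbinom n 0 = 1 := by cases n <;> rfl

lemma gbinom_zero_succ (k : ℕ) : gbinom 0 (k + 1) = 0 := rfl

lemma gbinom_succ (n k : ℕ) :
    gbinom (n + 1) (k + 1) = gbinom n k + X ^ (k + 1) * gbinom n (k + 1) := rfl

lemma gbinom_eq_zero : ∀ (n k : ℕ), n < k → gbinom n k = 0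
  | 0, _ + 1, _ => rfl
  | n + 1, k + 1, h => by
      rw [gbinom_succ, gbinom_eq_zero n k (by omega), gbinom_eq_zero n (k + 1) (by omega)]
      ring

lemma gbinom_self : ∀ n : ℕ, gbinom n n = 1
  | 0 => rfl
  | n + 1 => by
      rw [gbinom_succ, gbinom_self n, gbinom_eq_zero n (n + 1) (by omega)]
      ring

lemma gbinom_one : ∀ m : ℕ, X * gbinom m 1 + 1 = gbinom m 1 + X ^ m
  | 0 => by rw [gbinom_zero_succ]; ring
  | m + 1 => by
      rw [gbinom_succ, gbinom_zero]
      linear_combination X * gbinom_one m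

lemma pascal2 : ∀ (n k : ℕ), gbinom (n + 1) (k + 1) = X ^ (n - k) * gbinom n k + gbinom n (k + 1)
  | 0, 0 => by
      rw [gbinom_succ, gbinom_zero, gbinom_zero_succ]; ring
  | 0, k + 1 => by
      rw [gbinom_eq_zero 1 (k + 1 + 1) (by omega), gbinom_eq_zero 0 (k + 1) (by omega),
        gbinom_eq_zero 0 (k + 1 + 1) (by omega)]
      ring
  | n + 1, 0 => by
      rw [gbinom_succ, gbinom_zero, Nat.sub_zero]
      linear_combination gbinom_one (n + 1)
  | n + 1, k + 1 => by
      have d0 := gbinom_succ (n + 1) (k + 1)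
      have d1 := gbinom_succ n k
      have d2 := gbinom_succ n (k + 1)
      have i1 := pascal2 n k
      have i2 := pascal2 n (k + 1)
      rw [Nat.succ_sub_succ]
      by_cases hk : k < n
      · have hx : (X : Polynomial ℤ) ^ (k + 2) * X ^ (n - (k + 1)) = X ^ (n - k) * X ^ (k + 1) := by
          rw [← pow_add, ← pow_add]; congr 1; omega
        linear_combination d0 + i1 + X ^ (k + 2) * i2 - X ^ (n - k) * d1 - d2 +
          gbinom n (k + 1) * hx
      · rcases Nat.eq_or_lt_of_le (Nat.le_of_not_lt hk) with h1 | h1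
        · subst h1
          rw [gbinom_self, gbinom_self, gbinom_eq_zero (n + 1) (n + 2) (by omega),
            Nat.sub_self]
          ring
        · rw [gbinom_eq_zero (n + 2) (k + 2) (by omega), gbinom_eq_zero (n + 1) (k + 1) (by omega),
            gbinom_eq_zero (n + 1) (k + 2) (by omega)]
          ring

lemma gbinom_symm : ∀ (n k : ℕ), k ≤ n → gbinom n (n - k) = gbinom n k
  | n, 0, _ => by rw [Nat.sub_zero, gbinom_self, gbinom_zero]
  | n + 1, k + 1, h => by
      rcases Nat.eq_or_lt_of_le h with h1 | h2
      · obtain rfl : k = n := by omega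
        rw [Nat.sub_self, gbinom_zero, gbinom_self]
      · have hk : k < n := by omega
        have e : n + 1 - (k + 1) = (n - (k + 1)) + 1 := by omega
        rw [e, gbinom_succ, gbinom_symm n (k + 1) (by omega),
          show n - (k + 1) + 1 = n - k by omega, gbinom_symm n k (by omega), pascal2]
        ring

lemma gbinomZ_neg {N : ℕ} {r : ℤ} (h : r < 0) : gbinomZ N r = 0 := by
  rw [gbinomZ, if_neg (by omega)]

lemma gbinomZ_big {N : ℕ} {r : ℤ} (h : (N : ℤ) < r) : gbinomZ N r = 0 := by
  rw [gbinomZ, if_pos (by omega)]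
  exact gbinom_eq_zero N r.toNat (by omega)

lemma pascal1Z (N : ℕ) (j : ℤ) :
    gbinomZ (N + 1) j = gbinomZ N (j - 1) + X ^ j.toNat * gbinomZ N j := by
  rcases lt_trichotomy j 0 with h | h | h
  · rw [gbinomZ_neg h, gbinomZ_neg (by omega), gbinomZ_neg h]; ring
  · subst h
    simp only [gbinomZ]
    rw [if_pos le_rfl, if_neg (by omega), if_pos le_rfl]
    simp [gbinom_zero]
  · have h0 : (0 : ℤ) ≤ j := by omega
    have h1 : (0 : ℤ) ≤ j - 1 := by omega
    set m := (j - 1).toNat with hm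
    have hj : j.toNat = m + 1 := by omega
    simp only [gbinomZ, if_pos h0, if_pos h1]
    rw [hj, gbinom_succ]

lemma pascal2Z (N : ℕ) (j : ℤ) :
    gbinomZ (N + 1) j = X ^ ((N : ℤ) + 1 - j).toNat * gbinomZ N (j - 1) + gbinomZ N j := by
  rcases lt_trichotomy j 0 with h | h | h
  · rw [gbinomZ_neg h, gbinomZ_neg (by omega), gbinomZ_neg h]; ring
  · subst h
    simp only [gbinomZ]
    rw [if_pos le_rfl, if_neg (by omega), if_pos le_rfl]
    simp [gbinom_zero]
  · have h0 : (0 : ℤ) ≤ j := by omega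
    have h1 : (0 : ℤ) ≤ j - 1 := by omega
    set m := (j - 1).toNat with hm
    have hj : j.toNat = m + 1 := by omega
    simp only [gbinomZ, if_pos h0, if_pos h1]
    rw [hj, pascal2 N m, show ((N : ℤ) + 1 - j).toNat = N - m by omega]

lemma symmZ (N : ℕ) (r : ℤ) : gbinomZ N ((N : ℤ) - r) = gbinomZ N r := by
  rcases lt_or_ge r 0 with h | h
  · rw [gbinomZ_neg h, gbinomZ_big (show (N : ℤ) < (N : ℤ) - r by omega)]
  · rcases lt_or_ge (N : ℤ) r with h2 | h2
    · rw [gbinomZ_big h2, gbinomZ_neg (by omega)]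
    · have h3 : (0 : ℤ) ≤ (N : ℤ) - r := by omega
      simp only [gbinomZ, if_pos h, if_pos h3]
      have : ((N : ℤ) - r).toNat = N - r.toNat := by omega
      rw [this]
      exact gbinom_symm N r.toNat (by omega)

/-! ### The summand families -/

noncomputable def sg (k : ℤ) : Polynomial ℤ := (-1) ^ k.natAbs

def e1 (k : ℤ) : ℕ := 2 * k.natAbs ^ 2

def e2 (k : ℤ) : ℕ := (2 * k ^ 2 + 2 * k).toNat

noncomputable def fS (n : ℕ) (k : ℤ) : Polynomial ℤ :=
  sg k * X ^ e1 k * gbinomZ (2 * n) ((n : ℤ) + 2 * k)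

noncomputable def fP (n : ℕ) (k : ℤ) : Polynomial ℤ :=
  sg k * X ^ e1 k * gbinomZ (2 * n + 1) ((n : ℤ) + 1 + 2 * k)

noncomputable def fQ (n : ℕ) (k : ℤ) : Polynomial ℤ :=
  sg k * X ^ e2 k * gbinomZ (2 * n + 1) ((n : ℤ) + 1 + 2 * k)

noncomputable def fV (n : ℕ) (k : ℤ) : Polynomial ℤ :=
  sg k * X ^ e2 k * gbinomZ (2 * n) ((n : ℤ) + 1 + 2 * k)

lemma sg_neg (k : ℤ) : sg (-k) = sg k := by simp [sg]

lemma sg_succ (k : ℤ) : sg (k + 1) = - sg k := by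
  unfold sg
  rcases Int.even_or_odd k with h | h
  · rw [(Int.natAbs_odd.mpr h.add_one).neg_one_pow, (Int.natAbs_even.mpr h).neg_one_pow]
  · rw [(Int.natAbs_even.mpr h.add_one).neg_one_pow, (Int.natAbs_odd.mpr h).neg_one_pow]
    ring

lemma sg_pred (k : ℤ) : sg (-1 - k) = - sg k := by
  rw [show (-1 - k : ℤ) = -(k + 1) by ring, sg_neg, sg_succ]

lemma e1_neg (k : ℤ) : e1 (-k) = e1 k := by simp [e1]

lemma e2_pred (k : ℤ) : e2 (-1 - k) = e2 k := by
  unfold e2; congr 1; ring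

lemma e2_int_nonneg (k : ℤ) : (0 : ℤ) ≤ 2 * k ^ 2 + 2 * k := by
  rcases le_or_gt 0 k with h | h
  · nlinarith [sq_nonneg k]
  · have h2 : 0 ≤ (-k) * (-(k + 1)) :=
      mul_nonneg (by omega) (by omega)
    nlinarith [h2]

lemma ha (n : ℕ) (k : ℤ) (h : 0 ≤ (n : ℤ) + 1 + 2 * k) :
    e1 k + ((n : ℤ) + 1 + 2 * k).toNat = (n + 1) + e2 k := by
  have hsq : ((k.natAbs : ℤ)) ^ 2 = k ^ 2 := Int.natAbs_sq k
  have key : ((e1 k : ℕ) : ℤ) + (((n : ℤ) + 1 + 2 * k).toNat : ℤ) =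
      ((n : ℤ) + 1) + ((e2 k : ℕ) : ℤ) := by
    rw [Int.toNat_of_nonneg h]
    unfold e1 e2
    rw [Int.toNat_of_nonneg (e2_int_nonneg k)]
    push_cast
    linear_combination 2 * sq_abs k
  exact_mod_cast key

lemma hb (n : ℕ) (k : ℤ) (h : 0 ≤ (n : ℤ) - 2 * k) :
    e2 k + (((2 * n : ℕ) : ℤ) + 1 - ((n : ℤ) + 1 + 2 * k)).toNat = n + e1 k := by
  have hsq : ((k.natAbs : ℤ)) ^ 2 = k ^ 2 := Int.natAbs_sq k
  have h' : (0 : ℤ) ≤ ((2 * n : ℕ) : ℤ) + 1 - ((n : ℤ) + 1 + 2 * k) := by push_cast; omega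
  have key : ((e2 k : ℕ) : ℤ) + ((((2 * n : ℕ) : ℤ) + 1 - ((n : ℤ) + 1 + 2 * k)).toNat : ℤ) =
      (n : ℤ) + ((e1 k : ℕ) : ℤ) := by
    rw [Int.toNat_of_nonneg h']
    unfold e1 e2
    rw [Int.toNat_of_nonneg (e2_int_nonneg k)]
    push_cast
    linear_combination (-2 : ℤ) * sq_abs k
  exact_mod_cast key

/-! ### Finite supports -/

lemma supp_fin (h : ℤ → Polynomial ℤ) (N : ℕ) (a : ℤ) :
    (Function.support fun k : ℤ => h k * gbinomZ N (a + 2 * k)).Finite := by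
  apply Set.Finite.subset (Set.finite_Icc (-(N : ℤ) - a.natAbs) ((N : ℤ) + a.natAbs))
  intro k hk
  simp only [Function.mem_support] at hk
  simp only [Set.mem_Icc]
  by_contra hc
  apply hk
  have hz : a + 2 * k < 0 ∨ (N : ℤ) < a + 2 * k := by omega
  rcases hz with hz | hz
  · rw [gbinomZ_neg hz, mul_zero]
  · rw [gbinomZ_big hz, mul_zero]

lemma fin_smul (c : Polynomial ℤ) {f : ℤ → Polynomial ℤ} (h : (support f).Finite) :
    (support fun k => c * f k).Finite := by
  apply h.subset
  intro k hk
  simp only [Function.mem_support] at hk ⊢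
  exact fun h0 => hk (by rw [h0, mul_zero])

lemma fS_fin (n : ℕ) : (support (fS n)).Finite := by
  unfold fS; exact supp_fin (fun k => sg k * X ^ e1 k) (2 * n) (n : ℤ)

lemma fP_fin (n : ℕ) : (support (fP n)).Finite := by
  unfold fP; exact supp_fin (fun k => sg k * X ^ e1 k) (2 * n + 1) ((n : ℤ) + 1)

lemma fQ_fin (n : ℕ) : (support (fQ n)).Finite := by
  unfold fQ; exact supp_fin (fun k => sg k * X ^ e2 k) (2 * n + 1) ((n : ℤ) + 1)

lemma fV_fin (n : ℕ) : (support (fV n)).Finite := by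
  unfold fV; exact supp_fin (fun k => sg k * X ^ e2 k) (2 * n) ((n : ℤ) + 1)

lemma fP_neg_fin (n : ℕ) : (support fun k : ℤ => fP n (-k)).Finite := by
  have h : (support fun k : ℤ => fP n (-k)) = Neg.neg ⁻¹' (support (fP n)) := by
    ext k; simp [Function.mem_support]
  rw [h]
  exact (fP_fin n).preimage neg_injective.injOn

/-! ### Pointwise identities -/

lemma fV_reflect (n : ℕ) (k : ℤ) : fV n (-1 - k) = - fV n k := by
  unfold fV
  rw [sg_pred, e2_pred,
    show (n : ℤ) + 1 + 2 * (-1 - k) = ((2 * n : ℕ) : ℤ) - ((n : ℤ) + 1 + 2 * k) by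
      push_cast; ring,
    symmZ]
  ring

lemma fP_eq (n : ℕ) (k : ℤ) : fP n k = fS n k + X ^ (n + 1) * fV n k := by
  unfold fP fS fV
  rw [pascal1Z (2 * n) ((n : ℤ) + 1 + 2 * k),
    show (n : ℤ) + 1 + 2 * k - 1 = (n : ℤ) + 2 * k by ring, mul_add]
  congr 1
  by_cases h : 0 ≤ (n : ℤ) + 1 + 2 * k
  · have hpow : (X : Polynomial ℤ) ^ e1 k * X ^ (((n : ℤ) + 1 + 2 * k).toNat) =
        X ^ (n + 1) * X ^ e2 k := by
      rw [← pow_add, ← pow_add, ha n k h]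
    linear_combination (sg k * gbinomZ (2 * n) ((n : ℤ) + 1 + 2 * k)) * hpow
  · rw [gbinomZ_neg (show (n : ℤ) + 1 + 2 * k < 0 by omega)]
    ring

lemma fQ_eq (n : ℕ) (k : ℤ) : fQ n k = X ^ n * fS n k + fV n k := by
  unfold fQ fS fV
  rw [pascal2Z (2 * n) ((n : ℤ) + 1 + 2 * k),
    show (n : ℤ) + 1 + 2 * k - 1 = (n : ℤ) + 2 * k by ring, mul_add]
  congr 1
  by_cases h : 0 ≤ (n : ℤ) - 2 * k
  · have hpow : (X : Polynomial ℤ) ^ e2 k *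
        X ^ ((((2 * n : ℕ) : ℤ) + 1 - ((n : ℤ) + 1 + 2 * k)).toNat) =
        X ^ n * X ^ e1 k := by
      rw [← pow_add, ← pow_add, hb n k h]
    linear_combination (sg k * gbinomZ (2 * n) ((n : ℤ) + 2 * k)) * hpow
  · rw [gbinomZ_big (show ((2 * n : ℕ) : ℤ) < (n : ℤ) + 2 * k by push_cast; omega)]
    ring

lemma fS_succ_eq (n : ℕ) (k : ℤ) : fS (n + 1) k = fP n (-k) + X ^ (n + 1) * fQ n k := by
  unfold fS fP fQ
  rw [show 2 * (n + 1) = (2 * n + 1) + 1 by ring,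
    show (((n + 1 : ℕ) : ℤ)) = (n : ℤ) + 1 by push_cast; ring,
    pascal1Z (2 * n + 1) ((n : ℤ) + 1 + 2 * k),
    show (n : ℤ) + 1 + 2 * k - 1 = (n : ℤ) + 2 * k by ring, mul_add]
  congr 1
  · rw [sg_neg, e1_neg]
    congr 1
    rw [show (n : ℤ) + 2 * k = ((2 * n + 1 : ℕ) : ℤ) - ((n : ℤ) + 1 + 2 * (-k)) by
        push_cast; ring,
      symmZ]
  · by_cases h : 0 ≤ (n : ℤ) + 1 + 2 * k
    · have hpow : (X : Polynomial ℤ) ^ e1 k * X ^ (((n : ℤ) + 1 + 2 * k).toNat) =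
          X ^ (n + 1) * X ^ e2 k := by
        rw [← pow_add, ← pow_add, ha n k h]
      linear_combination (sg k * gbinomZ (2 * n + 1) ((n : ℤ) + 1 + 2 * k)) * hpow
    · rw [gbinomZ_neg (show (n : ℤ) + 1 + 2 * k < 0 by omega)]
      ring

/-! ### Sum identities -/

def reflEquiv : ℤ ≃ ℤ :=
  ⟨fun k => -1 - k, fun k => -1 - k, fun k => by ring, fun k => by ring⟩

lemma V0 (n : ℕ) : ∑ᶠ k : ℤ, fV n k = 0 := by
  have h2 : (∑ᶠ k : ℤ, fV n k) = - ∑ᶠ k : ℤ, fV n k := by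
    conv_lhs => rw [← finsum_comp_equiv reflEquiv (f := fV n)]
    have : ∀ k : ℤ, fV n (reflEquiv k) = - fV n k := fun k => fV_reflect n k
    rw [finsum_congr this, finsum_neg_distrib]
  have h3 : (2 : Polynomial ℤ) * (∑ᶠ k : ℤ, fV n k) = 0 := by linear_combination h2
  rcases mul_eq_zero.mp h3 with h | h
  · exact absurd h two_ne_zero
  · exact h

lemma PS (n : ℕ) : ∑ᶠ k : ℤ, fP n k = ∑ᶠ k : ℤ, fS n k := by
  rw [finsum_congr (fP_eq n),
    finsum_add_distrib (fS_fin n) (fin_smul _ (fV_fin n)),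
    ← mul_finsum _ _, V0, mul_zero, add_zero]

lemma QS (n : ℕ) : ∑ᶠ k : ℤ, fQ n k = X ^ n * ∑ᶠ k : ℤ, fS n k := by
  rw [finsum_congr (fQ_eq n),
    finsum_add_distrib (fin_smul _ (fS_fin n)) (fV_fin n),
    ← mul_finsum _ _, V0, add_zero]

lemma step (n : ℕ) :
    ∑ᶠ k : ℤ, fS (n + 1) k = (1 + X ^ (2 * n + 1)) * ∑ᶠ k : ℤ, fS n k := by
  have hre : (∑ᶠ k : ℤ, fP n (-k)) = ∑ᶠ k : ℤ, fP n k := by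
    rw [← finsum_comp_equiv (Equiv.neg ℤ) (f := fP n)]
    exact finsum_congr fun k => by simp
  calc ∑ᶠ k : ℤ, fS (n + 1) k
      = ∑ᶠ k : ℤ, (fP n (-k) + X ^ (n + 1) * fQ n k) := finsum_congr (fS_succ_eq n)
    _ = (∑ᶠ k : ℤ, fP n (-k)) + ∑ᶠ k : ℤ, X ^ (n + 1) * fQ n k :=
        finsum_add_distrib (fP_neg_fin n) (fin_smul _ (fQ_fin n))
    _ = (∑ᶠ k : ℤ, fP n k) + X ^ (n + 1) * ∑ᶠ k : ℤ, fQ n k := by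
        rw [hre, ← mul_finsum _ _]
    _ = (∑ᶠ k : ℤ, fS n k) + X ^ (n + 1) * (X ^ n * ∑ᶠ k : ℤ, fS n k) := by
        rw [PS, QS]
    _ = (1 + X ^ (2 * n + 1)) * ∑ᶠ k : ℤ, fS n k := by ring

lemma base : ∑ᶠ k : ℤ, fS 0 k = 1 := by
  rw [finsum_eq_single (fS 0) 0 ?side]
  · norm_num [fS, sg, e1, gbinomZ, gbinom_zero]
  case side =>
    intro x hx
    unfold fS
    rcases lt_trichotomy x 0 with h | h | h
    · rw [gbinomZ_neg (show ((0 : ℕ) : ℤ) + 2 * x < 0 by omega), mul_zero]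
    · exact absurd h hx
    · rw [gbinomZ_big (show ((2 * 0 : ℕ) : ℤ) < ((0 : ℕ) : ℤ) + 2 * x by push_cast; omega),
        mul_zero]

lemma main (n : ℕ) :
    ∑ᶠ k : ℤ, fS n k = ∏ i ∈ Finset.range n, (1 + X ^ (2 * i + 1)) := by
  induction n with
  | zero => simpa using base
  | succ m ih =>
      rw [step, ih, Finset.prod_range_succ]
      ring

end GaussAux

theorem stmt4 (n : ℕ) :
    ∑ᶠ k : ℤ, ((-1 : Polynomial ℤ) ^ k.natAbs * Polynomial.X ^ (2 * k.natAbs ^ 2) *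
        gbinomZ (2 * n) ((n : ℤ) + 2 * k)) =
      ∏ i ∈ Finset.range n, (1 + Polynomial.X ^ (2 * i + 1)) := by
  exact GaussAux.main n
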